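/- arXiv:1304.5438 — 2 statements merged into one kernel-verified Lean document; each statement's English description precedes it below -/
import Mathlib

section
/- There exists a function φ from the nonempty finite words over {0,1,2} to {0,1} such that, for W_φ = {π₁φ(π₁)π₂φ(π₂)π₃φ(π₃)⋯ : each πᵢ is a nonempty finite word over {0,1,2} and π₁ starts with 2} ⊆ Paths(G_{0,1,2},2), Player 0 has a 1-bounded last-move winning strategy for the Banach–Mazur game (G_{0,1,2}, 2, W_φ), but Player 0 has no positional winning strategy for this game. -/
open MeasureTheory
open scoped ENNReal NNReal

namespace BMGame

variable {V : Type*}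

/-- The prefix of length `n` of the infinite sequence `ρ`. -/
def pref (ρ : ℕ → V) (n : ℕ) : List V := (List.range n).map ρ

/-- `ρ` is an infinite path of the graph `E` starting at `v₀`. -/
def IsPlay (E : V → V → Prop) (v₀ : V) (ρ : ℕ → V) : Prop :=
  ρ 0 = v₀ ∧ ∀ n, E (ρ n) (ρ (n + 1))

/-- `π` is a nonempty finite path of the graph `E` starting at `v₀` (a position of the game). -/
def IsPos (E : V → V → Prop) (v₀ : V) (π : List V) : Prop :=
  π.head? = some v₀ ∧ π.Chain' E

/-- A strategy for player 0 assigns to each position the (nonempty) block of vertices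
appended by player 0's move; `(π ++ f π).Chain' E` says that this block is a path
starting at the last vertex of `π`. -/
def IsStrategy (E : V → V → Prop) (v₀ : V) (f : List V → List V) : Prop :=
  ∀ π, IsPos E v₀ π → f π ≠ [] ∧ (π ++ f π).Chain' E

/-- The play `ρ` is consistent with the strategy `f`: there are cut points
`c 0, c 1, …` (the lengths of the prefixes built after each move of player 1) such that
after each such prefix player 0 plays according to `f`, and player 1 then appends a
nonempty block. -/
def ConsGen (f : List V → List V) (ρ : ℕ → V) : Prop :=
  ∃ c : ℕ → ℕ, 1 ≤ c 0 ∧ ∀ i,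
    pref ρ (c i + (f (pref ρ (c i))).length) = pref ρ (c i) ++ f (pref ρ (c i)) ∧
    c i + (f (pref ρ (c i))).length < c (i + 1)

/-- `f` is a winning strategy for player 0 in the Banach–Mazur game `(E, v₀, W)`. -/
def WinningStrategy (E : V → V → Prop) (v₀ : V) (W : Set (ℕ → V))
    (f : List V → List V) : Prop :=
  IsStrategy E v₀ f ∧ ∀ ρ, IsPlay E v₀ ρ → ConsGen f ρ → ρ ∈ W

/-- The strategy `f` is `b`-bounded: each of its moves has length at most `b`. -/
def BoundedBy (E : V → V → Prop) (v₀ : V) (b : ℕ) (f : List V → List V) : Prop :=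
  ∀ π, IsPos E v₀ π → (f π).length ≤ b

/-- A positional strategy assigns to each vertex the nonempty block appended. -/
def IsPositional (E : V → V → Prop) (f : V → List V) : Prop :=
  ∀ v, f v ≠ [] ∧ (v :: f v).Chain' E

/-- Consistency with a positional strategy: after each prefix chosen by player 1,
player 0 plays `f` of the current (last) vertex. -/
def ConsPositional (f : V → List V) (ρ : ℕ → V) : Prop :=
  ∃ c : ℕ → ℕ, 1 ≤ c 0 ∧ ∀ i,
    pref ρ (c i + (f (ρ (c i - 1))).length) = pref ρ (c i) ++ f (ρ (c i - 1)) ∧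
    c i + (f (ρ (c i - 1))).length < c (i + 1)

def PositionalWinning (E : V → V → Prop) (v₀ : V) (W : Set (ℕ → V)) (f : V → List V) : Prop :=
  IsPositional E f ∧ ∀ ρ, IsPlay E v₀ ρ → ConsPositional f ρ → ρ ∈ W

/-- Structural requirement shared by move-counting and length-counting strategies:
for `n ≥ 1`, `h v n` is a nonempty block forming a path from `v`. -/
def IsCountingStrategy (E : V → V → Prop) (h : V → ℕ → List V) : Prop :=
  ∀ v n, 1 ≤ n → h v n ≠ [] ∧ (v :: h v n).Chain' E

/-- Consistency with a move-counting strategy: at its `i`-th move (`i ≥ 1`) player 0 plays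
`h (current vertex) i`. -/
def ConsMoveCounting (h : V → ℕ → List V) (ρ : ℕ → V) : Prop :=
  ∃ c : ℕ → ℕ, 1 ≤ c 0 ∧ ∀ i,
    pref ρ (c i + (h (ρ (c i - 1)) (i + 1)).length) = pref ρ (c i) ++ h (ρ (c i - 1)) (i + 1) ∧
    c i + (h (ρ (c i - 1)) (i + 1)).length < c (i + 1)

def MoveCountingWinning (E : V → V → Prop) (v₀ : V) (W : Set (ℕ → V))
    (h : V → ℕ → List V) : Prop :=
  IsCountingStrategy E h ∧ ∀ ρ, IsPlay E v₀ ρ → ConsMoveCounting h ρ → ρ ∈ W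

/-- Consistency with a length-counting strategy: after a prefix of length `c i`
player 0 plays `h (current vertex) (c i)`. -/
def ConsLengthCounting (h : V → ℕ → List V) (ρ : ℕ → V) : Prop :=
  ∃ c : ℕ → ℕ, 1 ≤ c 0 ∧ ∀ i,
    pref ρ (c i + (h (ρ (c i - 1)) (c i)).length) = pref ρ (c i) ++ h (ρ (c i - 1)) (c i) ∧
    c i + (h (ρ (c i - 1)) (c i)).length < c (i + 1)

def LengthCountingWinning (E : V → V → Prop) (v₀ : V) (W : Set (ℕ → V))
    (h : V → ℕ → List V) : Prop :=
  IsCountingStrategy E h ∧ ∀ ρ, IsPlay E v₀ ρ → ConsLengthCounting h ρ → ρ ∈ W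

/-- The segment `ρ a, ρ (a+1), …, ρ (b-1)` of an infinite sequence. -/
def seg (ρ : ℕ → V) (a b : ℕ) : List V := (List.range (b - a)).map fun j => ρ (a + j)

/-- A last-move strategy is defined on all nonempty finite paths of the graph. -/
def IsLastMove (E : V → V → Prop) (g : List V → List V) : Prop :=
  ∀ π, π ≠ [] → π.Chain' E → g π ≠ [] ∧ (π ++ g π).Chain' E

/-- Consistency with the last-move strategy `g`: the play decomposes as
`π₁ g(π₁) π₂ g(π₂) ⋯` where the `πᵢ` are the (nonempty) moves of player 1. -/
def ConsLastMove (g : List V → List V) (ρ : ℕ → V) : Prop :=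
  ∃ s e : ℕ → ℕ, s 0 = 0 ∧ (∀ i, s i < e i) ∧ ∀ i,
    seg ρ (e i) (e i + (g (seg ρ (s i) (e i))).length) = g (seg ρ (s i) (e i)) ∧
    s (i + 1) = e i + (g (seg ρ (s i) (e i))).length

def LastMoveWinning (E : V → V → Prop) (v₀ : V) (W : Set (ℕ → V)) (g : List V → List V) : Prop :=
  IsLastMove E g ∧ ∀ ρ, IsPlay E v₀ ρ → ConsLastMove g ρ → ρ ∈ W

/-- The cylinder generated by the finite word `π`. -/
def Cyl (π : List V) : Set (ℕ → V) := {ρ | pref ρ π.length = π}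

/-- One-step transition probabilities obtained from the weights `w`. -/
noncomputable def transP [Fintype V] (E : V → V → Prop) (w : V → V → ℝ≥0) (u v : V) : ℝ≥0∞ := by
  classical
  exact if E u v then
    (w u v : ℝ≥0∞) / ∑ x ∈ Finset.univ.filter (fun x => E u x), (w u x : ℝ≥0∞)
  else 0

/-- The probability of the cylinder generated by a finite word: the product of the
one-step transition probabilities along it. -/
noncomputable def pathP [Fintype V] (E : V → V → Prop) (w : V → V → ℝ≥0) (π : List V) : ℝ≥0∞ :=
  ((π.zip π.tail).map fun q => transP E w q.1 q.2).prod

/-- `P` is the reasonable probability measure associated with the weights `w`. -/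
def IsReasonable [Fintype V] [MeasurableSpace (ℕ → V)] (E : V → V → Prop) (v₀ : V)
    (w : V → V → ℝ≥0) (P : Measure (ℕ → V)) : Prop :=
  IsProbabilityMeasure P ∧ ∀ π : List V, π.head? = some v₀ → P (Cyl π) = pathP E w π

/-- `Ps` is a legal move of player 0 in the generalised game `G_α` at position `π`: a
finite nonempty set of nonempty finite paths from the last vertex of `π` whose union of
cylinders has conditional probability at least `α` given `Cyl π`. -/
def LegalProposal [MeasurableSpace (ℕ → V)] (E : V → V → Prop) (P : Measure (ℕ → V)) (α : ℝ)
    (π : List V) (Ps : Finset (List V)) : Prop :=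
  Ps.Nonempty ∧ (∀ τ ∈ Ps, τ ≠ [] ∧ (π ++ τ).Chain' E) ∧
    ENNReal.ofReal α ≤ P (⋃ τ ∈ Ps, Cyl (π ++ τ)) / P (Cyl π)

/-- An α-strategy for player 0. -/
def IsAlphaStrategy [MeasurableSpace (ℕ → V)] (E : V → V → Prop) (v₀ : V) (P : Measure (ℕ → V))
    (α : ℝ) (f : List V → Finset (List V)) : Prop :=
  ∀ π, IsPos E v₀ π → LegalProposal E P α π (f π)

/-- Consistency with an α-strategy: at each stage, player 1 picks some element of the
set proposed by player 0 and appends a nonempty block after it. -/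
def ConsAlpha (f : List V → Finset (List V)) (ρ : ℕ → V) : Prop :=
  ∃ c : ℕ → ℕ, 1 ≤ c 0 ∧ ∀ i, ∃ τ ∈ f (pref ρ (c i)),
    pref ρ (c i + τ.length) = pref ρ (c i) ++ τ ∧ c i + τ.length < c (i + 1)

def AlphaWinning [MeasurableSpace (ℕ → V)] (E : V → V → Prop) (v₀ : V) (P : Measure (ℕ → V))
    (α : ℝ) (W : Set (ℕ → V)) (f : List V → Finset (List V)) : Prop :=
  IsAlphaStrategy E v₀ P α f ∧ ∀ ρ, IsPlay E v₀ ρ → ConsAlpha f ρ → ρ ∈ W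

/-- A strategy for player 1 in the generalised game `G_α` consists of an initial path and,
for each position together with a legal proposal of player 0, the selected element of the
proposal and the next (nonempty) block played by player 1. -/
def IsP1Strategy [MeasurableSpace (ℕ → V)] (E : V → V → Prop) (v₀ : V) (P : Measure (ℕ → V))
    (α : ℝ) (init : List V) (g : List V → Finset (List V) → List V × List V) : Prop :=
  IsPos E v₀ init ∧
    ∀ π Ps, IsPos E v₀ π → LegalProposal E P α π Ps →
      (g π Ps).1 ∈ Ps ∧ (g π Ps).2 ≠ [] ∧ (π ++ ((g π Ps).1 ++ (g π Ps).2)).Chain' E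

/-- Consistency of a play with player 1's strategy `(init, g)`:
there is a sequence of legal proposals of player 0 generating the play. -/
def ConsP1 [MeasurableSpace (ℕ → V)] (E : V → V → Prop) (P : Measure (ℕ → V)) (α : ℝ)
    (init : List V) (g : List V → Finset (List V) → List V × List V) (ρ : ℕ → V) : Prop :=
  ∃ (Ps : ℕ → Finset (List V)) (p : ℕ → List V), p 0 = init ∧
    (∀ n, pref ρ (p n).length = p n) ∧
    ∀ n, LegalProposal E P α (p n) (Ps n) ∧
      p (n + 1) = p n ++ ((g (p n) (Ps n)).1 ++ (g (p n) (Ps n)).2)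

def P1Winning [MeasurableSpace (ℕ → V)] (E : V → V → Prop) (v₀ : V) (P : Measure (ℕ → V))
    (α : ℝ) (W : Set (ℕ → V)) (init : List V)
    (g : List V → Finset (List V) → List V × List V) : Prop :=
  IsP1Strategy E v₀ P α init g ∧ ∀ ρ, IsPlay E v₀ ρ → ConsP1 E P α init g ρ → ρ ∉ W

/-- A union of cylinders, i.e. an open subset of the space of sequences. -/
def IsCylOpen (U : Set (ℕ → V)) : Prop :=
  ∃ S : Set (List V), U = ⋃ π ∈ S, Cyl π

/-- `W` is a countable intersection of open subsets of the space `Paths (G, v₀)`. -/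
def IsCountableInterOfOpens (E : V → V → Prop) (v₀ : V) (W : Set (ℕ → V)) : Prop :=
  ∃ U : ℕ → Set (ℕ → V), (∀ n, IsCylOpen (U n)) ∧
    W = {ρ | IsPlay E v₀ ρ} ∩ ⋂ n, U n

/-- For every `n`, the concatenation of the blocks `u 0, …, u (n-1)` is a prefix of `ρ`. -/
def AgreesWithBlocks (ρ : ℕ → V) (u : ℕ → List V) : Prop :=
  ∀ n, pref ρ (((List.range n).map u).flatten).length = ((List.range n).map u).flatten

end BMGame

open BMGame

/-- The complete directed graph on `{0,1,2}` (all edges, including self-loops). -/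
def E3 : Fin 3 → Fin 3 → Prop := fun _ _ => True

/-- The winning condition determined by `φ`: infinite sequences of the form
`π₁ φ(π₁) π₂ φ(π₂) ⋯` where each `πᵢ` is a nonempty finite word over `{0,1,2}`
and `π₁` starts with `2`. -/
def W18 (φ : List (Fin 3) → Fin 3) : Set (ℕ → Fin 3) :=
  {ρ | ∃ π : ℕ → List (Fin 3), (∀ i, π i ≠ []) ∧ (π 0).head? = some 2 ∧
    AgreesWithBlocks ρ fun i => π i ++ [φ (π i)]}


namespace Stmt18Aux
open BMGame

/-! ### Generic lemmas about `pref` and `seg` -/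

variable {V : Type*} (ρ : ℕ → V)

@[simp] lemma pref_length (n : ℕ) : (pref ρ n).length = n := by simp [pref]
@[simp] lemma seg_length (a b : ℕ) : (seg ρ a b).length = b - a := by simp [seg]

lemma pref_getElem {n i : ℕ} (h : i < (pref ρ n).length) : (pref ρ n)[i] = ρ i := by
  simp [pref]

lemma seg_getElem {a b i : ℕ} (h : i < (seg ρ a b).length) : (seg ρ a b)[i] = ρ (a + i) := by
  simp [seg]

lemma pref_eq_seg (n : ℕ) : pref ρ n = seg ρ 0 n := by simp [pref, seg]

lemma seg_append {a b c : ℕ} (hab : a ≤ b) (hbc : b ≤ c) :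
    seg ρ a b ++ seg ρ b c = seg ρ a c := by
  apply List.ext_getElem
  · simp; omega
  · intro i h1 h2
    rcases lt_or_ge i (b - a) with h | h
    · rw [List.getElem_append_left (by simpa using h)]
      rw [seg_getElem, seg_getElem]
    · rw [List.getElem_append_right (by simpa using h)]
      rw [seg_getElem, seg_getElem]
      congr 1
      simp at h1 ⊢
      omega

lemma seg_singleton (a : ℕ) : seg ρ a (a + 1) = [ρ a] := by simp [seg, List.range_succ]

lemma seg_ne_nil {a b : ℕ} (h : a < b) : seg ρ a b ≠ [] := by
  simp [seg, List.range_eq_nil]; omega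

lemma seg_getElem' {a b i : ℕ} (h : i < b - a) : (seg ρ a b)[i]? = some (ρ (a + i)) := by
  rw [List.getElem?_eq_getElem (by simp; omega), seg_getElem]

lemma pref_add (x d : ℕ) : pref ρ (x + d) = pref ρ x ++ seg ρ x (x + d) := by
  rw [pref_eq_seg, pref_eq_seg, seg_append ρ (Nat.zero_le x) (Nat.le_add_right x d)]

lemma seg_of_pref {N : ℕ} {A B C : List V} (h : pref ρ N = A ++ (B ++ C)) :
    B = seg ρ A.length (A.length + B.length) := by
  have hN : A.length + B.length + C.length = N := by
    have := congrArg List.length h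
    simp at this
    omega
  apply List.ext_getElem (by simp)
  intro i h1 h2
  rw [seg_getElem]
  have h3 : (pref ρ N)[A.length + i]? = some (ρ (A.length + i)) := by
    rw [List.getElem?_eq_getElem (by simp; omega), pref_getElem]
  rw [h, List.getElem?_append_right (by omega)] at h3
  rw [Nat.add_sub_cancel_left, List.getElem?_append_left h1,
    List.getElem?_eq_getElem h1] at h3
  exact (Option.some_inj.mp h3)

lemma chain'_E3 (l : List (Fin 3)) : l.Chain' E3 := by
  induction l with
  | nil => exact List.isChain_nil
  | cons a t ih =>
    cases t with
    | nil => exact List.isChain_singleton _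
    | cons b t' => exact List.isChain_cons_cons.mpr ⟨trivial, ih⟩

/-! ### The function `phi` -/

def flip3 (x : Fin 3) : Fin 3 := if x = 0 then 1 else 0

lemma flip3_mem (x : Fin 3) : flip3 x = 0 ∨ flip3 x = 1 := by
  unfold flip3; split <;> simp

lemma flip3_ne (x : Fin 3) : flip3 x ≠ x := by
  fin_cases x <;> decide

def D (m : ℕ) : Option (List (Fin 3)) :=
  if m = 0 then none else Encodable.decode ((m-1).unpair.1)

def Spec (τ w : List (Fin 3)) (j : ℕ) : Prop :=
  ∃ m α, D m = some w ∧ w.length < m ∧ j < w.length ∧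
    w.head? ≠ some 2 ∧ w.getLast? ≠ some 2 ∧
    τ = α ++ List.replicate m 2 ++ w.take j ∧
    (∀ x, α.getLast? = some x → x ≠ 2) ∧
    ¬ (List.replicate (m+1) 2 <:+: α)

lemma head?_take_pos {γ : Type*} {l : List γ} {n : ℕ} (h : 0 < n) :
    (l.take n).head? = l.head? := by
  cases l with
  | nil => simp
  | cons a t => cases n with
    | zero => omega
    | succ k => simp

lemma unique_core {m m' j j' : ℕ} {w w' α α' : List (Fin 3)}
    (hD : D m = some w) (hD' : D m' = some w')
    (hm : w.length < m) (hm' : w'.length < m')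
    (hj : j < w.length) (hj' : j' < w'.length)
    (hh : w.head? ≠ some 2) (hh' : w'.head? ≠ some 2)
    (heq : α ++ List.replicate m 2 ++ w.take j = α' ++ List.replicate m' 2 ++ w'.take j')
    (hαl' : ∀ x, α'.getLast? = some x → x ≠ 2)
    (hinf' : ¬ (List.replicate (m'+1) 2 <:+: α'))
    (hle : m' + j' ≤ m + j) : w = w' ∧ j = j' := by
  have hsl : (w.take j).length = j := by rw [List.length_take]; omega
  have hsl' : (w'.take j').length = j' := by rw [List.length_take]; omega
  rw [List.append_assoc, List.append_assoc] at heq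
  obtain ⟨β, hβ1, hβ2⟩ : ∃ β, α' = α ++ β ∧
      List.replicate m (2:Fin 3) ++ w.take j = β ++ (List.replicate m' (2:Fin 3) ++ w'.take j') := by
    rcases List.append_eq_append_iff.mp heq with ⟨a', h1, h2⟩ | ⟨c', h1, h2⟩
    · exact ⟨a', h1, h2⟩
    · have hc : c'.length = 0 := by
        have := congrArg List.length h2
        simp only [List.length_append, List.length_replicate, hsl, hsl'] at this
        omega
      rw [List.eq_nil_of_length_eq_zero hc] at h1 h2
      exact ⟨[], by simpa using h1.symm, by simpa using h2.symm⟩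
  have hβl : β.length = (m + j) - (m' + j') := by
    have := congrArg List.length hβ2
    simp only [List.length_append, List.length_replicate, hsl, hsl'] at this
    omega
  rcases lt_trichotomy j j' with hjj | hjj | hjj
  · exfalso
    have hK : β.length + m' < m := by omega
    have hd : w'.take j' = (List.replicate m (2:Fin 3) ++ w.take j).drop (β.length + m') := by
      rw [hβ2, ← List.append_assoc]
      rw [show β.length + m' = (β ++ List.replicate m' (2:Fin 3)).length by simp]
      exact List.drop_left.symm
    have h2' : (w'.take j').head? = some 2 := by
      rw [hd, List.head?_drop]
      rw [List.getElem?_append_left (by simpa using hK)]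
      simp [hK]
    rw [head?_take_pos (by omega)] at h2'
    exact hh' h2'
  · subst hjj
    rw [← List.append_assoc] at hβ2
    have h2 := List.append_inj' hβ2.symm (by omega)
    have hβ2' : β ++ List.replicate m' (2:Fin 3) = List.replicate m (2:Fin 3) := h2.1
    have hβrep : ∀ x ∈ β, x = 2 := by
      intro x hx
      have : x ∈ List.replicate m (2:Fin 3) := hβ2' ▸ List.mem_append_left _ hx
      exact List.eq_of_mem_replicate this
    have hβnil : β = [] := by
      by_contra hne
      have hlast : β.getLast? = some (β.getLast hne) := List.getLast?_eq_getLast hne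
      have h2m : β.getLast hne = 2 := hβrep _ (List.getLast_mem hne)
      exact hαl' 2 (by rw [hβ1, List.getLast?_append_of_ne_nil _ hne, hlast, h2m]) rfl
    rw [hβnil, List.nil_append] at hβ2'
    have hmm : m' = m := by
      have := congrArg List.length hβ2'
      simpa using this
    rw [hmm] at hD'
    rw [hD'] at hD
    exact ⟨(Option.some_inj.mp hD).symm, rfl⟩
  · rcases le_or_gt (m' + j') j with hsub | hsub
    · exfalso
      have hβm : m ≤ β.length := by omega
      have hβtake : β.take m = List.replicate m (2:Fin 3) := by
        have h1 : (β ++ (List.replicate m' (2:Fin 3) ++ w'.take j')).take m = β.take m :=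
          List.take_append_of_le_length hβm
        rw [← hβ2, List.take_append_of_le_length (by simp), List.take_replicate] at h1
        rw [← h1]
        congr 1
        omega
      have hm'm : m' < m := by omega
      have hexp : α' = α ++ (List.replicate (m'+1) (2:Fin 3) ++
          (List.replicate (m-(m'+1)) (2:Fin 3) ++ β.drop m)) := by
        rw [hβ1]
        congr 1
        rw [← List.append_assoc, ← List.replicate_add, show m' + 1 + (m - (m'+1)) = m by omega]
        rw [← hβtake, List.take_append_drop]
      exact hinf' ⟨α, List.replicate (m-(m'+1)) (2:Fin 3) ++ β.drop m,
        by rw [hexp]; simp [List.append_assoc]⟩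
    · exfalso
      have hβm : β.length ≤ m := by omega
      have hd : w.take j = (β ++ (List.replicate m' (2:Fin 3) ++ w'.take j')).drop m := by
        rw [← hβ2, List.drop_left' (by simp)]
      have h2' : (w.take j).head? = some 2 := by
        rw [hd, List.head?_drop]
        rw [List.getElem?_append_right (by omega)]
        rw [List.getElem?_append_left (by simp; omega), List.getElem?_replicate,
          if_pos (by omega)]
      rw [head?_take_pos (by omega)] at h2'
      exact hh h2'

lemma spec_unique {τ w w' : List (Fin 3)} {j j' : ℕ}
    (h : Spec τ w j) (h' : Spec τ w' j') : w = w' ∧ j = j' := by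
  obtain ⟨m, α, hD, hm, hj, hh, -, hτ, hαl, hinf⟩ := h
  obtain ⟨m', α', hD', hm', hj', hh', -, hτ', hαl', hinf'⟩ := h'
  rcases le_total (m' + j') (m + j) with hle | hle
  · exact unique_core hD hD' hm hm' hj hj' hh hh' (hτ.symm.trans hτ') hαl' hinf' hle
  · have := unique_core hD' hD hm' hm hj' hj hh' hh (hτ'.symm.trans hτ) hαl hinf hle
    exact ⟨this.1.symm, this.2.symm⟩

open Classical in
noncomputable def phi (τ : List (Fin 3)) : Fin 3 :=
  if h : ∃ p : List (Fin 3) × ℕ, Spec τ p.1 p.2 then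
    flip3 (h.choose.1.getD h.choose.2 0)
  else 0

lemma phi_mem (τ : List (Fin 3)) : phi τ = 0 ∨ phi τ = 1 := by
  unfold phi
  split
  · exact flip3_mem _
  · left; rfl

lemma phi_ne_two (τ : List (Fin 3)) : phi τ ≠ 2 := by
  rcases phi_mem τ with h | h <;> rw [h] <;> decide

lemma phi_spec {τ w : List (Fin 3)} {j : ℕ} (h : Spec τ w j) :
    phi τ = flip3 (w.getD j 0) := by
  have hex : ∃ p : List (Fin 3) × ℕ, Spec τ p.1 p.2 := ⟨(w, j), h⟩
  rw [phi, dif_pos hex]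
  obtain ⟨hw, hj⟩ := spec_unique hex.choose_spec h
  rw [hw, hj]

/-! ### The last-move winning strategy -/

lemma lastmove : LastMoveWinning E3 2 (W18 phi) (fun π => [phi π]) := by
  constructor
  · intro π _ _
    exact ⟨by simp, chain'_E3 _⟩
  · rintro ρ ⟨h0, -⟩ ⟨s, e, hs0, hse, hmain⟩
    refine ⟨fun i => seg ρ (s i) (e i), fun i => seg_ne_nil ρ (hse i), ?_, ?_⟩
    · rw [show (seg ρ (s 0) (e 0)).head? = some ((seg ρ (s 0) (e 0))[0]'(by
          simp; have := hse 0; omega)) from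
        List.head?_eq_getElem?.trans (List.getElem?_eq_getElem _)]
      rw [seg_getElem]
      rw [hs0, h0]
    · have hρe : ∀ i, ρ (e i) = phi (seg ρ (s i) (e i)) := by
        intro i
        have := (hmain i).1
        simp only [List.length_singleton] at this
        rw [seg_singleton] at this
        exact List.singleton_injective this
      have hs1 : ∀ i, s (i + 1) = e i + 1 := by
        intro i
        have := (hmain i).2
        simpa using this
      have hblock : ∀ i,
          seg ρ (s i) (e i) ++ [phi (seg ρ (s i) (e i))] = seg ρ (s i) (s (i+1)) := by
        intro i
        rw [← hρe i, ← seg_singleton ρ (e i), seg_append ρ (hse i).le (by omega), hs1 i]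
      have hflat : ∀ n,
          ((List.range n).map fun i => seg ρ (s i) (e i) ++ [phi (seg ρ (s i) (e i))]).flatten
            = pref ρ (s n) := by
        intro n
        induction n with
        | zero => simp [pref, hs0]
        | succ n ih =>
          rw [List.range_succ, List.map_append, List.flatten_append, ih]
          simp only [List.map_singleton, List.flatten_singleton]
          rw [hblock n, pref_eq_seg, pref_eq_seg,
            seg_append ρ (by omega) (by have := hse n; have := hs1 n; omega)]
      intro n
      rw [hflat n]
      simp

/-! ### Extracting cut points from membership in `W18` -/

lemma cut_facts (φ : List (Fin 3) → Fin 3) {ρ : ℕ → Fin 3} (h : ρ ∈ W18 φ) :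
    ∃ (π : ℕ → List (Fin 3)) (q : ℕ → ℕ), (∀ n, q n < q (n+1)) ∧
      (∀ n, ρ (q n) = φ (π n)) ∧ ∀ n, π (n+1) = seg ρ (q n + 1) (q (n+1)) := by
  obtain ⟨π, hne, -, hagree⟩ := h
  set F : ℕ → List (Fin 3) := fun n =>
    ((List.range n).map fun i => π i ++ [φ (π i)]).flatten with hF
  have hagree' : ∀ n, pref ρ (F n).length = F n := hagree
  have hFsucc : ∀ n, F (n+1) = F n ++ (π n ++ [φ (π n)]) := by
    intro n
    simp only [hF, List.range_succ, List.map_append, List.flatten_append,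
      List.map_cons, List.map_nil, List.flatten_cons, List.flatten_nil, List.append_nil]
  have hlen : ∀ n, (F (n+1)).length = (F n).length + (π n).length + 1 := by
    intro n
    rw [hFsucc n]
    simp
    omega
  refine ⟨π, fun n => (F n).length + (π n).length, ?_, ?_, ?_⟩
  · intro n
    beta_reduce
    have := hlen n
    omega
  · intro n
    beta_reduce
    have h1 : pref ρ (F (n+1)).length = (F n ++ π n) ++ [φ (π n)] := by
      rw [hagree' (n+1), hFsucc n, List.append_assoc]
    have hidx : (F n).length + (π n).length < (F (n+1)).length := by
      rw [hlen n]; omega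
    have h3 : (pref ρ (F (n+1)).length)[(F n).length + (π n).length]? =
        some (ρ ((F n).length + (π n).length)) := by
      rw [List.getElem?_eq_getElem (by simpa using hidx), pref_getElem]
    rw [h1, List.getElem?_append_right (by simp)] at h3
    simp at h3
    exact h3.symm
  · intro n
    beta_reduce
    have h1 : pref ρ (F (n+2)).length = F (n+1) ++ (π (n+1) ++ [φ (π (n+1))]) := by
      rw [hagree' (n+2), hFsucc (n+1)]
    have := seg_of_pref ρ h1
    rw [← hlen n]
    exact this

/-! ### No positional winning strategy -/

lemma strip_left (v : List (Fin 3)) :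
    ∃ a t, v = List.replicate a 2 ++ t ∧ t.head? ≠ some 2 := by
  induction v with
  | nil => exact ⟨0, [], by simp, by simp⟩
  | cons x v ih =>
    obtain ⟨a, t, h1, h2⟩ := ih
    by_cases hx : x = 2
    · exact ⟨a+1, t, by rw [hx, List.replicate_succ, List.cons_append, ← h1], h2⟩
    · exact ⟨0, x :: v, by simp, by simpa using hx⟩

lemma strip (v : List (Fin 3)) (hv : ¬ ∀ x ∈ v, x = 2) :
    ∃ a w b, v = List.replicate a 2 ++ w ++ List.replicate b 2 ∧ w ≠ [] ∧
      w.head? ≠ some 2 ∧ w.getLast? ≠ some 2 := by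
  obtain ⟨a, t, h1, h2⟩ := strip_left v
  have ht : t ≠ [] := by
    rintro rfl
    apply hv
    intro x hx
    rw [h1, List.append_nil] at hx
    exact List.eq_of_mem_replicate hx
  obtain ⟨b, u, h3, h4⟩ := strip_left t.reverse
  have h5 : t = u.reverse ++ List.replicate b 2 := by
    have := congrArg List.reverse h3
    simpa [List.reverse_append, List.reverse_replicate] using this
  have hu : u ≠ [] := by
    rintro rfl
    simp at h5
    rcases Nat.eq_zero_or_pos b with hb | hb
    · rw [hb] at h5; simp at h5; exact ht h5
    · apply h2
      rw [h5]
      cases b with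
      | zero => omega
      | succ k => simp [List.replicate_succ]
  have hur : u.reverse ≠ [] := by simpa using hu
  refine ⟨a, u.reverse, b, by rw [h1, h5, List.append_assoc], hur, ?_, ?_⟩
  · have : t.head? = u.reverse.head? := by
      rw [h5]
      cases hc : u.reverse with
      | nil => exact absurd hc hur
      | cons y l => simp [hc]
    rw [← this]
    exact h2
  · rw [List.getLast?_reverse]
    exact h4

lemma getD_head {w : List (Fin 3)} (h : w ≠ []) : w.head? = some (w.getD 0 0) := by
  cases w with
  | nil => exact absurd rfl h
  | cons x l => simp

lemma getD_last {w : List (Fin 3)} (h : w ≠ []) :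
    w.getLast? = some (w.getD (w.length - 1) 0) := by
  have hlen : 0 < w.length := List.length_pos_iff.mpr h
  rw [List.getLast?_eq_getElem?, List.getElem?_eq_getElem (by omega),
    List.getD_eq_getElem w 0 (by omega)]

lemma no_positional : ¬ ∃ f : Fin 3 → List (Fin 3), PositionalWinning E3 2 (W18 phi) f := by
  rintro ⟨f, hposf, hwin⟩
  have hvne : f 2 ≠ [] := (hposf 2).1
  by_cases hall : ∀ x ∈ f 2, x = 2
  · -- `f 2` consists only of 2s; the constant-2 play defeats `f`.
    set ρ : ℕ → Fin 3 := fun _ => 2 with hρ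
    have hpref : ∀ n, pref ρ n = List.replicate n 2 := by
      intro n
      simp [pref, hρ, List.map_const']
    have hplay : IsPlay E3 2 ρ := ⟨rfl, fun _ => trivial⟩
    have hv2 : f 2 = List.replicate (f 2).length 2 := List.eq_replicate_length.mpr hall
    have hcons : ConsPositional f ρ := by
      refine ⟨fun k => k * ((f 2).length + 1) + 1, by beta_reduce; omega, ?_⟩
      intro i
      beta_reduce
      have hρi : ρ (i * ((f 2).length + 1) + 1 - 1) = 2 := rfl
      rw [hρi]
      constructor
      · rw [hpref, hpref, hv2, ← List.replicate_add]
        simp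
      · have h1 : (i+1) * ((f 2).length + 1) = i * ((f 2).length + 1) + ((f 2).length + 1) :=
          Nat.succ_mul _ _
        omega
    obtain ⟨π, q, -, hval, -⟩ := cut_facts phi (hwin ρ hplay hcons)
    have : (2 : Fin 3) = phi (π 0) := hval 0
    exact phi_ne_two (π 0) this.symm
  · -- general case
    obtain ⟨a, w, b, hv, hwne, hwh, hwl⟩ := strip (f 2) hall
    have hwh' : w.getD 0 0 ≠ 2 := fun h => hwh (by rw [getD_head hwne, h])
    have hwl' : w.getD (w.length - 1) 0 ≠ 2 := fun h => hwl (by rw [getD_last hwne, h])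
    have hwpos : 0 < w.length := List.length_pos_iff.mpr hwne
    set m : ℕ := Nat.pair (Encodable.encode w) (a + b + w.length + 1) + 1 with hmdef
    have hDm : D m = some w := by
      rw [D, if_neg (by omega)]
      simp [hmdef, Nat.unpair_pair]
    have hmk : a + b + w.length + 1 ≤ m := by
      have := Nat.right_le_pair (Encodable.encode w) (a + b + w.length + 1)
      omega
    have hmw : w.length < m := by omega
    set P : ℕ := m + w.length with hPdef
    have hPpos : 0 < P := by omega
    set ρ : ℕ → Fin 3 := fun i =>
      if (i + b) % P < m then 2 else w.getD ((i + b) % P - m) 0 with hρdef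
    have hρ2 : ∀ i, (i + b) % P < m → ρ i = 2 := by
      intro i h
      simp only [hρdef]
      rw [if_pos h]
    have hρw : ∀ i, m ≤ (i + b) % P → ρ i = w.getD ((i + b) % P - m) 0 := by
      intro i h
      simp only [hρdef]
      rw [if_neg (by omega : ¬ (i + b) % P < m)]
    have hplay : IsPlay E3 2 ρ := by
      refine ⟨?_, fun _ => trivial⟩
      apply hρ2
      rw [Nat.zero_add, Nat.mod_eq_of_lt (by omega)]
      omega
    -- consistency with the positional strategy f
    have hvlen : (f 2).length = a + w.length + b := by rw [hv]; simp; omega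
    have hseg2 : ∀ k, seg ρ (k * P + (m - a - b)) (k * P + (m - a - b) + (f 2).length) = f 2 := by
      intro k
      apply List.ext_getElem?
      intro i
      rcases lt_or_ge i (f 2).length with hiv | hiv
      · rw [seg_getElem' ρ (by omega)]
        have hiv' : i < a + w.length + b := by rw [hvlen] at hiv; omega
        have harith : k * P + (m - a - b) + i + b = (m - a + i) + k * P := by omega
        rw [hv]
        rcases lt_or_ge i a with hz1 | hz1
        · rw [hρ2 _ (by rw [harith, Nat.add_mul_mod_self_right,
            Nat.mod_eq_of_lt (by omega)]; omega)]
          rw [List.getElem?_append_left (by simp; omega),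
            List.getElem?_append_left (by simp; omega)]
          rw [List.getElem?_replicate, if_pos hz1]
        · rcases lt_or_ge i (a + w.length) with hz2 | hz2
          · rw [hρw _ (by rw [harith, Nat.add_mul_mod_self_right,
              Nat.mod_eq_of_lt (by omega)]; omega)]
            rw [harith, Nat.add_mul_mod_self_right, Nat.mod_eq_of_lt (by omega)]
            rw [List.getElem?_append_left (by simp; omega),
              List.getElem?_append_right (by simp; omega)]
            rw [List.getElem?_eq_getElem (by simp; omega)]
            rw [List.getD_eq_getElem w 0 (by omega)]
            congr 2
            simp
            omega
          · rw [hρ2 _ (by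
              have harith2 : k * P + (m - a - b) + i + b
                  = (i - a - w.length) + (k + 1) * P := by
                have h6 : (k + 1) * P = k * P + P := Nat.succ_mul _ _
                omega
              rw [harith2, Nat.add_mul_mod_self_right, Nat.mod_eq_of_lt (by omega)]; omega)]
            rw [List.getElem?_append_right (by simp; omega)]
            rw [List.getElem?_replicate, if_pos (by simp; omega)]
      · rw [List.getElem?_eq_none (by simp; omega), List.getElem?_eq_none (by omega)]
    have hcons : ConsPositional f ρ := by
      refine ⟨fun k => k * P + (m - a - b), by beta_reduce; omega, ?_⟩
      intro i
      beta_reduce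
      have hρi : ρ (i * P + (m - a - b) - 1) = 2 := by
        apply hρ2
        have harith : i * P + (m - a - b) - 1 + b = (m - a - 1) + i * P := by omega
        rw [harith, Nat.add_mul_mod_self_right, Nat.mod_eq_of_lt (by omega)]
        omega
      rw [hρi]
      constructor
      · rw [pref_add, hseg2 i]
      · have h1 : (i+1) * P = i * P + P := Nat.succ_mul _ _
        omega
    -- the play must be in W18 phi : derive a contradiction
    obtain ⟨π, q, hqmono, hval, hsegπ⟩ := cut_facts phi (hwin ρ hplay hcons)
    have hq2 : ∀ n, ρ (q n) ≠ 2 := by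
      intro n h
      exact phi_ne_two (π n) ((hval n).symm.trans h)
    have hqm : ∀ n, m ≤ (q n + b) % P := by
      intro n
      by_contra h
      exact hq2 n (hρ2 _ (by omega))
    have hqP : ∀ n, (q n + b) % P < P := fun n => Nat.mod_lt _ hPpos
    have hρqw : ∀ n, ρ (q n) = w.getD ((q n + b) % P - m) 0 := fun n => hρw _ (hqm n)
    -- find a cut pair crossing a period boundary
    obtain ⟨n, hdiv⟩ : ∃ n, (q n + b) / P < (q (n+1) + b) / P := by
      by_contra h
      push_neg at h
      have hbd : ∀ n, (q n + b) / P ≤ (q 0 + b) / P := by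
        intro n
        induction n with
        | zero => exact le_rfl
        | succ n ih => exact le_trans (h n) ih
      have hq_ge : ∀ n, n ≤ q n := by
        intro n
        induction n with
        | zero => exact Nat.zero_le _
        | succ n ih => have := hqmono n; omega
      set N := ((q 0 + b) / P + 1) * P with hN
      have h1 := Nat.div_add_mod' (q N + b) P
      have h2 := hqP N
      have h3 := hbd N
      have h4 := hq_ge N
      have h5 : (q N + b) / P * P ≤ (q 0 + b) / P * P := Nat.mul_le_mul_right P h3
      have h6 : ((q 0 + b) / P + 1) * P = (q 0 + b) / P * P + P := Nat.succ_mul _ _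
      omega
    obtain ⟨k, k', r, r', hrw, hrw', hEq, hEq', hkk'⟩ :
        ∃ k k' r r', r < w.length ∧ r' < w.length ∧
          q n + b = k * P + (m + r) ∧ q (n+1) + b = k' * P + (m + r') ∧ k < k' := by
      refine ⟨(q n + b) / P, (q (n+1) + b) / P, (q n + b) % P - m, (q (n+1) + b) % P - m,
        ?_, ?_, ?_, ?_, hdiv⟩
      · have := hqP n; have := hqm n; omega
      · have := hqP (n+1); have := hqm (n+1); omega
      · have := Nat.div_add_mod' (q n + b) P
        have := hqm n
        omega
      · have := Nat.div_add_mod' (q (n+1) + b) P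
        have := hqm (n+1)
        omega
    have hmod' : (q (n+1) + b) % P = m + r' := by
      have hEq'' : q (n+1) + b = (m + r') + k' * P := by omega
      rw [hEq'', Nat.add_mul_mod_self_right, Nat.mod_eq_of_lt (by omega)]
    have hρq' : ρ (q (n+1)) = w.getD r' 0 := by
      rw [hρqw (n+1), hmod', Nat.add_sub_cancel_left]
    have hXY : k * P + P ≤ k' * P := by
      calc k * P + P = (k + 1) * P := (Nat.succ_mul _ _).symm
        _ ≤ k' * P := Nat.mul_le_mul_right P (by omega)
    have hPk' : P ≤ k' * P := by
      have h0 : 1 * P ≤ k' * P := Nat.mul_le_mul_right P (by omega)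
      omega
    set i₀ : ℕ := k' * P - b with hi₀
    have hbP : b < P := by omega
    have hi₀1 : q n + 1 ≤ i₀ := by omega
    have hi₀2 : i₀ + m ≤ q (n+1) := by omega
    -- the three parts of the word π (n+1)
    have hmark : seg ρ i₀ (i₀ + m) = List.replicate m 2 := by
      apply List.ext_getElem (by simp)
      intro i h1 h2
      rw [seg_getElem]
      have h2' : i < m := by simpa using h2
      have harith : i₀ + i + b = i + k' * P := by omega
      rw [List.getElem_replicate]
      apply hρ2
      rw [harith, Nat.add_mul_mod_self_right, Nat.mod_eq_of_lt (by omega)]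
      omega
    have htail : seg ρ (i₀ + m) (q (n+1)) = w.take r' := by
      apply List.ext_getElem?
      intro i
      rcases lt_or_ge i r' with hir | hir
      · rw [seg_getElem' ρ (by omega)]
        have harith : i₀ + m + i + b = (m + i) + k' * P := by omega
        rw [hρw _ (by rw [harith, Nat.add_mul_mod_self_right,
          Nat.mod_eq_of_lt (by omega)]; omega)]
        rw [harith, Nat.add_mul_mod_self_right, Nat.mod_eq_of_lt (by omega),
          Nat.add_sub_cancel_left, List.getD_eq_getElem w 0 (by omega)]
        rw [List.getElem?_eq_getElem (by rw [List.length_take]; omega), List.getElem_take]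
      · rw [List.getElem?_eq_none (by simp; omega),
          List.getElem?_eq_none (by rw [List.length_take]; omega)]
    have hsplit : π (n+1) = seg ρ (q n + 1) i₀ ++ List.replicate m 2 ++ w.take r' := by
      rw [hsegπ n, List.append_assoc, ← hmark, ← htail,
        seg_append ρ (by omega) (by omega),
        seg_append ρ (by omega) (by omega)]
    have hαlast : ∀ x, (seg ρ (q n + 1) i₀).getLast? = some x → x ≠ 2 := by
      intro x hx
      have hne : seg ρ (q n + 1) i₀ ≠ [] := by
        intro h
        rw [h] at hx
        simp at hx
      have hlpos : 0 < i₀ - (q n + 1) := by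
        rcases Nat.eq_zero_or_pos (i₀ - (q n + 1)) with h | h
        · exfalso
          apply hne
          apply List.length_eq_zero_iff.mp
          simp
          omega
        · exact h
      have hx2 : (seg ρ (q n + 1) i₀)[(seg ρ (q n + 1) i₀).length - 1]? = some x := by
        rw [← List.getLast?_eq_getElem?]
        exact hx
      rw [List.getElem?_eq_getElem (by simp; omega), seg_getElem] at hx2
      have harith : q n + 1 + ((seg ρ (q n + 1) i₀).length - 1) = i₀ - 1 := by
        simp
        omega
      rw [harith] at hx2
      have harith2 : i₀ - 1 + b = (P - 1) + (k' - 1) * P := by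
        have h8 : (k' - 1 + 1) * P = (k' - 1) * P + P := Nat.succ_mul _ _
        have h9 : k' - 1 + 1 = k' := by omega
        rw [h9] at h8
        omega
      rw [hρw _ (by rw [harith2, Nat.add_mul_mod_self_right,
        Nat.mod_eq_of_lt (by omega)]; omega)] at hx2
      rw [harith2, Nat.add_mul_mod_self_right, Nat.mod_eq_of_lt (by omega)] at hx2
      have hidx : P - 1 - m = w.length - 1 := by omega
      rw [hidx] at hx2
      rw [← Option.some_inj.mp hx2]
      exact hwl'
    have hαinf : ¬ (List.replicate (m+1) 2 <:+: seg ρ (q n + 1) i₀) := by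
      rintro ⟨x, y, hxy⟩
      have hlen : x.length + (m+1) + y.length = i₀ - (q n + 1) := by
        have := congrArg List.length hxy
        simp at this
        omega
      have hall2 : ∀ i, i ≤ m → ρ (q n + 1 + (x.length + i)) = 2 := by
        intro i hi
        have h1 : (x ++ List.replicate (m+1) 2 ++ y)[x.length + i]? = some 2 := by
          rw [List.getElem?_append_left (by simp; omega),
            List.getElem?_append_right (by simp)]
          rw [List.getElem?_replicate, if_pos (by omega)]
        rw [hxy, seg_getElem' ρ (by omega)] at h1
        exact Option.some_inj.mp h1
      obtain ⟨Dp, d, hdP, hDp⟩ :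
          ∃ D d, d < P ∧ q n + 1 + x.length + b = D * P + d := by
        refine ⟨(q n + 1 + x.length + b) / P, (q n + 1 + x.length + b) % P,
          Nat.mod_lt _ hPpos, ?_⟩
        have := Nat.div_add_mod' (q n + 1 + x.length + b) P
        omega
      rcases lt_or_ge d m with hdm | hdm
      · have h2 : ρ (q n + 1 + x.length + (m - d)) = 2 := by
          have := hall2 (m - d) (by omega)
          rw [← this]
          congr 1
          omega
        have h3 : ρ (q n + 1 + x.length + (m - d)) = w.getD 0 0 := by
          have harith : q n + 1 + x.length + (m - d) + b = m + Dp * P := by omega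
          rw [hρw _ (by rw [harith, Nat.add_mul_mod_self_right,
            Nat.mod_eq_of_lt (by omega)])]
          rw [harith, Nat.add_mul_mod_self_right, Nat.mod_eq_of_lt (by omega)]
          simp
        rw [h2] at h3
        exact hwh' h3.symm
      · have hoff : P - 1 - d < m := by omega
        have h2 : ρ (q n + 1 + x.length + (P - 1 - d)) = 2 := by
          have := hall2 (P - 1 - d) (by omega)
          rw [← this]
          congr 1
          omega
        have h3 : ρ (q n + 1 + x.length + (P - 1 - d)) = w.getD (w.length - 1) 0 := by
          have harith : q n + 1 + x.length + (P - 1 - d) + b = (P - 1) + Dp * P := by omega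
          rw [hρw _ (by rw [harith, Nat.add_mul_mod_self_right,
            Nat.mod_eq_of_lt (by omega)]; omega)]
          rw [harith, Nat.add_mul_mod_self_right, Nat.mod_eq_of_lt (by omega)]
          congr 1
          omega
        rw [h2] at h3
        exact hwl' h3.symm
    have hSpec : Spec (π (n+1)) w r' :=
      ⟨m, seg ρ (q n + 1) i₀, hDm, hmw, hrw', hwh, hwl, hsplit, hαlast, hαinf⟩
    have hphi := phi_spec hSpec
    have hfin : w.getD r' 0 = flip3 (w.getD r' 0) := by
      have h1 := hρq'
      rw [hval (n+1), hphi] at h1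
      exact h1.symm
    exact flip3_ne _ hfin.symm

end Stmt18Aux

/-- There is a function `φ` from the nonempty finite words over `{0,1,2}` to `{0,1}` such
that, in the game `(G_{0,1,2}, 2, W18 φ)`, Player 0 has a `1`-bounded last-move winning
strategy but no positional winning strategy. -/
theorem stmt18 :
    ∃ φ : List (Fin 3) → Fin 3, (∀ l, φ l = 0 ∨ φ l = 1) ∧
      (∃ g : List (Fin 3) → List (Fin 3), LastMoveWinning E3 2 (W18 φ) g ∧
        ∀ l, l ≠ [] → (g l).length = 1) ∧
      ¬ ∃ f : Fin 3 → List (Fin 3), PositionalWinning E3 2 (W18 φ) f := by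
  exact ⟨Stmt18Aux.phi, Stmt18Aux.phi_mem,
    ⟨fun π => [Stmt18Aux.phi π], Stmt18Aux.lastmove, fun l _ => rfl⟩,
    Stmt18Aux.no_positional⟩
end

section
/- Let G_ℕ be the complete directed graph on the vertex set ℕ (all edges, including self-loops) and let W = {(σ_k)_{k≥1} ∈ ℕ^ω : for every n ≥ 1 there exists k ≥ 1 with (σ_k, σ_{k+1}) = (n, n+1)}. In the Banach–Mazur game (G_ℕ, 0, W), Player 0 has a bounded move-counting winning strategy (namely h(v,n) = the two-step path n, n+1), but Player 0 has no positional winning strategy. -/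
open MeasureTheory
open scoped ENNReal NNReal

open BMGame

/-- The complete directed graph on `ℕ` (all edges, including self-loops). -/
def EN : ℕ → ℕ → Prop := fun _ _ => True

/-- The set of sequences over `ℕ` such that for every `n ≥ 1` there is `k ≥ 1` with
`(σ_k, σ_{k+1}) = (n, n + 1)` (sequences are `0`-indexed, `σ_i = ρ (i - 1)`). -/
def W19 : Set (ℕ → ℕ) :=
  {ρ | ∀ n : ℕ, 1 ≤ n → ∃ k : ℕ, ρ k = n ∧ ρ (k + 1) = n + 1}

lemma chain'_EN (l : List ℕ) : l.Chain' EN := by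
  exact List.isChain_iff_getElem.2 (fun _ _ => trivial)

lemma pref_length' {V : Type*} (ρ : ℕ → V) (n : ℕ) : (pref ρ n).length = n := by
  simp [pref]

lemma pref_eq_iff {V : Type*} (ρ : ℕ → V) (a : ℕ) (l : List V) :
    pref ρ (a + l.length) = pref ρ a ++ l ↔ ∀ j (hj : j < l.length), ρ (a + j) = l[j] := by
  constructor
  · intro h j hj
    have h2 := congrArg (fun t => t[a + j]?) h
    simp only [pref, List.getElem?_map, List.getElem?_range (by omega : a + j < a + l.length),
      List.getElem?_append_right (by simp : ((List.range a).map ρ).length ≤ a + j),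
      Option.map_some] at h2
    simp at h2
    rw [List.getElem?_eq_getElem (by omega)] at h2
    exact Option.some.inj h2 |>.trans (by congr 1)
  · intro h
    apply List.ext_getElem (by simp [pref_length'])
    intro k h1 h2
    rcases lt_or_ge k a with hk | hk
    · have e1 : (pref ρ (a + l.length))[k]'h1 = ρ k := by simp [pref]
      rw [e1, List.getElem_append_left (by simpa [pref_length'] using hk)]
      simp [pref]
    · have e1 : (pref ρ (a + l.length))[k]'h1 = ρ k := by
        simp [pref]
      rw [e1, List.getElem_append_right (by simpa [pref_length'] using hk)]
      have := h (k - a) (by simp [pref_length'] at h2 ⊢; omega)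
      simp only [pref_length']
      rw [← this]
      congr 1
      omega

/-- On the infinite graph `G_ℕ`, in the game `(G_ℕ, 0, W19)` Player 0 has a bounded
move-counting winning strategy but no positional winning strategy. -/
theorem stmt19 :
    (∃ (h : ℕ → ℕ → List ℕ) (b : ℕ), 1 ≤ b ∧ MoveCountingWinning EN 0 W19 h ∧
        ∀ v n, 1 ≤ n → (h v n).length ≤ b) ∧
    ¬ ∃ f : ℕ → List ℕ, PositionalWinning EN 0 W19 f := by
  constructor
  · -- Part 1: bounded move-counting winning strategy
    refine ⟨fun _ n => [n, n + 1], 2, one_le_two, ⟨?_, ?_⟩, ?_⟩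
    · intro v n _
      exact ⟨by simp, chain'_EN _⟩
    · intro ρ _ hcons n hn
      obtain ⟨c, _, hc⟩ := hcons
      have key := (hc (n - 1)).1
      simp only [List.length_cons, List.length_nil] at key
      have key2 := (pref_eq_iff ρ (c (n - 1)) [n - 1 + 1, n - 1 + 2]).1 (by simpa using key)
      have h0 := key2 0 (by simp)
      have h1 := key2 1 (by simp)
      simp only [List.getElem_cons_zero, List.getElem_cons_succ, Nat.add_zero] at h0 h1
      exact ⟨c (n - 1), by omega, by omega⟩
    · intro v n _
      simp
  · -- Part 2: no positional winning strategy
    rintro ⟨f, hpos, hwin⟩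
    set L : List ℕ := 0 :: f 0 with hL
    set m : ℕ := L.length with hm
    have hf0 : f 0 ≠ [] := (hpos 0).1
    have hm1 : 2 ≤ m := by
      have := List.length_pos_iff.2 hf0
      simp [hm, hL]
      omega
    set ρ : ℕ → ℕ := fun k => L.getD (k % m) 0 with hρ
    have hρ_mem : ∀ k, ρ k ∈ L := by
      intro k
      have hk : k % m < m := Nat.mod_lt _ (by omega)
      rw [hρ]
      simp only []
      rw [List.getD_eq_getElem L 0 hk]
      exact List.getElem_mem _
    have hρ0 : ∀ i : ℕ, ρ (i * m) = 0 := by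
      intro i
      simp [hρ, Nat.mul_mod_left, hL]
    have hplay : IsPlay EN 0 ρ := ⟨by simpa using hρ0 0, fun _ => trivial⟩
    have hcons : ConsPositional f ρ := by
      refine ⟨fun i => i * m + 1, by simp, ?_⟩
      intro i
      have hlast : ρ (i * m + 1 - 1) = 0 := by simpa using hρ0 i
      have hlen : (f 0).length = m - 1 := by simp [hm, hL]
      rw [hlast]
      constructor
      · rw [pref_eq_iff]
        intro j hj
        have hjm : 1 + j < m := by omega
        have : (i * m + 1 + j) % m = 1 + j := by
          have : i * m + 1 + j = 1 + j + i * m := by ring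
          rw [this, Nat.add_mul_mod_self_right, Nat.mod_eq_of_lt hjm]
        simp only [hρ, this]
        rw [show (1 + j) = j + 1 by omega]
        rw [hL]
        simp only [List.getD_cons_succ]
        exact List.getD_eq_getElem _ 0 hj
      · show i * m + 1 + (f 0).length < (i + 1) * m + 1
        have h2 : (i + 1) * m = i * m + m := by ring
        omega
    have hW := hwin ρ hplay hcons
    obtain ⟨k, hk, -⟩ := hW (L.sum + 1) (by omega)
    have hmem := hρ_mem k
    rw [hk] at hmem
    have := List.single_le_sum (fun x _ => Nat.zero_le x) _ hmem
    omega
end
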